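/- Let q be a prime power and h ≥ 2. The set L = {(x : Tr(x) : y) : x ∈ F_{q^h}, y ∈ F_q, (x,y) ≠ (0,0)} of points in PG(2, q^h), where Tr = Tr_{q^h/q}, has exactly q^h + q^{h-1} + 1 elements. -/

import Mathlib

/-- The relative trace `x ↦ x + x^q + ⋯ + x^{q^{h-1}}`. -/
def Tr (q h : ℕ) {K : Type*} [Field K] (x : K) : K :=
  ∑ i ∈ Finset.range h, x ^ q ^ i

/-- The line of `PG(2, K)` with equation `a 0 * X + a 1 * Y + a 2 * Z = 0`. -/
def projLine {K : Type*} [Field K] (a : Fin 3 → K) :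
    Set (Projectivization K (Fin 3 → K)) :=
  {P | ∑ i, a i * P.rep i = 0}

/-- A subset of `PG(2, K)` is a line if it is `projLine a` for some nonzero `a`. -/
def IsLine {K : Type*} [Field K] (ℓ : Set (Projectivization K (Fin 3 → K))) : Prop :=
  ∃ a : Fin 3 → K, a ≠ 0 ∧ ℓ = projLine a

/-- The trace-construction point set
`{(x : Tr(x) : y) : x ∈ F_{q^h}, y ∈ F_q, (x,y) ≠ (0,0)}` in `PG(2, q^h)`. -/
def traceSet (q h : ℕ) (F K : Type*) [Field F] [Field K] [Algebra F K] :
    Set (Projectivization K (Fin 3 → K)) :=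
  {P | ∃ (x : K) (y : F), (x ≠ 0 ∨ y ≠ 0) ∧
    ∃ hv : (![x, Tr q h x, algebraMap F K y] : Fin 3 → K) ≠ 0,
      P = Projectivization.mk K (![x, Tr q h x, algebraMap F K y]) hv}

set_option linter.unusedSectionVars false

section aux
variable {K : Type*} [Field K] {q h : ℕ}

lemma Tr_zero (hq : 2 ≤ q) : Tr q h (0 : K) = 0 := by
  unfold Tr
  refine Finset.sum_eq_zero fun i _ => zero_pow ?_
  exact pow_ne_zero i (by omega)

lemma pow_fixed {c : K} (hc : c ^ q = c) (i : ℕ) : c ^ q ^ i = c := by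
  induction i with
  | zero => simp
  | succ n ih => rw [pow_succ, pow_mul, ih, hc]

lemma Tr_mul_fixed {c : K} (hc : c ^ q = c) (x : K) :
    Tr q h (c * x) = c * Tr q h x := by
  unfold Tr
  rw [Finset.mul_sum]
  exact Finset.sum_congr rfl fun i _ => by rw [mul_pow, pow_fixed hc]
end aux

section aux2
variable {K : Type*} [Field K] [Fintype K] {q h : ℕ}

lemma Tr_pow_q {p a : ℕ} [Fact p.Prime] [CharP K p] (hq : q = p ^ a)
    (hK : Fintype.card K = q ^ h) (x : K) : (Tr q h x) ^ q = Tr q h x := by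
  have hmap : (Tr q h x) ^ q = ∑ i ∈ Finset.range h, (x ^ q ^ i) ^ q := by
    subst hq
    simpa only [iterateFrobenius_def, Tr] using map_sum (iterateFrobenius K p a)
      (fun i => x ^ (p ^ a) ^ i) (Finset.range h)
  have hterm : ∀ i, (x ^ q ^ i) ^ q = x ^ q ^ (i + 1) := fun i => by
    rw [← pow_mul, ← pow_succ]
  have hxq : x ^ q ^ h = x := by rw [← hK, FiniteField.pow_card]
  calc (Tr q h x) ^ q = ∑ i ∈ Finset.range h, x ^ q ^ (i + 1) := by
        rw [hmap]; exact Finset.sum_congr rfl fun i _ => hterm i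
    _ = ∑ i ∈ Finset.range (h + 1), x ^ q ^ i - x ^ q ^ 0 := by
        rw [Finset.sum_range_succ' (fun i => x ^ q ^ i) h]; ring
    _ = Tr q h x := by
        rw [Finset.sum_range_succ, hxq]; simp [Tr]
end aux2

section aux3
open Polynomial
variable {K : Type*} [Field K] [Fintype K] {q h : ℕ}

lemma trPoly_natDegree (hq : 2 ≤ q) (hh : 1 ≤ h) :
    (∑ i ∈ Finset.range h, (X : K[X]) ^ q ^ i).natDegree = q ^ (h - 1) := by
  apply le_antisymm
  · apply Polynomial.natDegree_sum_le_of_forall_le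
    intro i hi
    rw [natDegree_X_pow]
    exact Nat.pow_le_pow_right (by omega) (by simp at hi; omega)
  · apply Polynomial.le_natDegree_of_ne_zero
    rw [Polynomial.finset_sum_coeff]
    have : ∀ i ∈ Finset.range h, ((X : K[X]) ^ q ^ i).coeff (q ^ (h - 1))
        = if i = h - 1 then 1 else 0 := by
      intro i _
      rw [Polynomial.coeff_X_pow]
      congr 1
      simp only [eq_iff_iff]
      exact ⟨fun he => Nat.pow_right_injective hq he.symm, fun he => by rw [he]⟩
    rw [Finset.sum_congr rfl this, Finset.sum_ite_eq' (Finset.range h) (h - 1) (fun _ => (1 : K))]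
    simp only [Finset.mem_range]
    rw [if_pos (by omega)]
    exact one_ne_zero

open scoped Classical in
lemma tr_fiber_le (hq : 2 ≤ q) (hh : 1 ≤ h) (c : K) :
    (Finset.univ.filter (fun x : K => Tr q h x = c)).card ≤ q ^ (h - 1) := by
  classical
  set P : K[X] := (∑ i ∈ Finset.range h, X ^ q ^ i) - C c with hP
  have hdeg : P.natDegree = q ^ (h - 1) := by
    rw [hP, natDegree_sub_C, trPoly_natDegree hq hh]
  have hP0 : P ≠ 0 := by
    intro h0
    rw [h0, natDegree_zero] at hdeg
    have : 1 ≤ q ^ (h - 1) := Nat.one_le_pow _ _ (by omega)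
    omega
  have hsub : Finset.univ.filter (fun x : K => Tr q h x = c) ⊆ P.roots.toFinset := by
    intro x hx
    simp only [Finset.mem_filter] at hx
    rw [Multiset.mem_toFinset, Polynomial.mem_roots']
    refine ⟨hP0, ?_⟩
    have : P.eval x = Tr q h x - c := by
      simp [hP, Polynomial.eval_finset_sum, Tr]
    rw [Polynomial.IsRoot, this, hx.2, sub_self]
  calc (Finset.univ.filter (fun x : K => Tr q h x = c)).card
      ≤ P.roots.toFinset.card := Finset.card_le_card hsub
    _ ≤ Multiset.card P.roots := Multiset.toFinset_card_le _
    _ ≤ P.natDegree := Polynomial.card_roots' P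
    _ = q ^ (h - 1) := hdeg
end aux3

section aux4
open Polynomial Finset
variable {K : Type*} [Field K] [Fintype K] {q h : ℕ}

set_option linter.unusedSectionVars false

open scoped Classical in
lemma fix_card_le (hq : 2 ≤ q) :
    (Finset.univ.filter (fun c : K => c ^ q = c)).card ≤ q := by
  set P : K[X] := X ^ q - X with hP
  have hdeg : P.natDegree = q := by
    apply le_antisymm
    · exact (Polynomial.natDegree_sub_le _ _).trans (by simp; omega)
    · apply Polynomial.le_natDegree_of_ne_zero
      rw [hP, Polynomial.coeff_sub, Polynomial.coeff_X_pow, if_pos rfl,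
        Polynomial.coeff_X_of_ne_one (by omega)]
      simp
  have hP0 : P ≠ 0 := fun h0 => by simp [h0] at hdeg; omega
  have hsub : Finset.univ.filter (fun c : K => c ^ q = c) ⊆ P.roots.toFinset := by
    intro x hx
    simp only [Finset.mem_filter] at hx
    rw [Multiset.mem_toFinset, Polynomial.mem_roots']
    exact ⟨hP0, by simp [hP, Polynomial.IsRoot, hx.2]⟩
  calc (Finset.univ.filter (fun c : K => c ^ q = c)).card
      ≤ P.roots.toFinset.card := Finset.card_le_card hsub
    _ ≤ Multiset.card P.roots := Multiset.toFinset_card_le _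
    _ ≤ P.natDegree := Polynomial.card_roots' P
    _ = q := hdeg

open scoped Classical in
lemma tr_fiber_card {p a : ℕ} [Fact p.Prime] [CharP K p] (hpa : q = p ^ a)
    (hq : 2 ≤ q) (hh : 1 ≤ h) (hcK : Fintype.card K = q ^ h)
    {c : K} (hc : c ^ q = c) :
    (Finset.univ.filter (fun x : K => Tr q h x = c)).card = q ^ (h - 1) := by
  set t := Finset.univ.filter (fun c : K => c ^ q = c) with ht
  have hmem : ∀ x : K, x ∈ (Finset.univ : Finset K) → Tr q h x ∈ t := by
    intro x _
    simp only [ht, Finset.mem_filter, Finset.mem_univ, true_and]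
    exact Tr_pow_q hpa hcK x
  have hsum := Finset.card_eq_sum_card_fiberwise hmem
  have hle : ∀ b ∈ t, (Finset.univ.filter (fun x : K => Tr q h x = b)).card ≤ q ^ (h - 1) :=
    fun b _ => tr_fiber_le hq hh b
  have htq : t.card ≤ q := fix_card_le hq
  have hhq : q ^ h = q * q ^ (h - 1) := by
    conv_lhs => rw [show h = 1 + (h - 1) by omega]
    rw [pow_add, pow_one]
  have hsum_le : (Finset.univ : Finset K).card ≤ t.card * q ^ (h - 1) := by
    rw [hsum]
    calc ∑ b ∈ t, (Finset.univ.filter (fun x : K => Tr q h x = b)).card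
        ≤ ∑ _b ∈ t, q ^ (h - 1) := Finset.sum_le_sum hle
      _ = t.card * q ^ (h - 1) := by rw [Finset.sum_const, smul_eq_mul]
  have hcardK : (Finset.univ : Finset K).card = q ^ h := by
    rw [Finset.card_univ, hcK]
  have heq : ∑ b ∈ t, (Finset.univ.filter (fun x : K => Tr q h x = b)).card
      = ∑ _b ∈ t, q ^ (h - 1) := by
    have h1 : t.card * q ^ (h - 1) ≤ q * q ^ (h - 1) :=
      Nat.mul_le_mul_right _ htq
    have : ∑ b ∈ t, (Finset.univ.filter (fun x : K => Tr q h x = b)).card = q ^ h := by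
      rw [← hsum, hcardK]
    rw [Finset.sum_const, smul_eq_mul, this]
    omega
  have := (Finset.sum_eq_sum_iff_of_le hle).mp heq
  have hct : c ∈ t := by simp [ht, hc]
  exact this c hct
end aux4

open Projectivization in
/-- The trace construction has exactly `q^h + q^(h-1) + 1` points. -/
theorem stmt_2 {F K : Type*} [Field F] [Field K] [Algebra F K]
    [Fintype F] [Fintype K]
    (q h : ℕ) (hq : IsPrimePow q) (hcard : Fintype.card F = q)
    (hh : 2 ≤ h) (hrank : Module.finrank F K = h) :
    (traceSet q h F K).ncard = q ^ h + q ^ (h - 1) + 1 := by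
  classical
  obtain ⟨p, a, hp, ha, hpa⟩ := hq
  rw [← Nat.prime_iff] at hp
  haveI : Fact p.Prime := ⟨hp⟩
  have hq2 : 2 ≤ q := by
    calc 2 ≤ p := hp.two_le
      _ = p ^ 1 := (pow_one p).symm
      _ ≤ p ^ a := Nat.pow_le_pow_right hp.pos ha
      _ = q := hpa
  -- characteristic
  haveI : CharP F p := by
    obtain ⟨n, hrp, hcF⟩ := FiniteField.card F (ringChar F)
    have : ringChar F = p := by
      have hd : ringChar F ∣ p ^ a := by
        rw [hpa, ← hcard, hcF]
        exact dvd_pow_self _ (by positivity)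
      exact (Nat.prime_dvd_prime_iff_eq hrp hp).mp (hrp.dvd_of_dvd_pow hd)
    rw [← this]
    exact ringChar.charP F
  haveI : CharP K p := charP_of_injective_algebraMap (algebraMap F K).injective p
  have hcK : Fintype.card K = q ^ h := by
    rw [← hcard, ← hrank]; exact Module.card_eq_pow_finrank
  have hpa' : q = p ^ a := hpa.symm
  have hh1 : 1 ≤ h := by omega
  -- fiber cardinalities
  have hfib1 : (Finset.univ.filter (fun x : K => Tr q h x = 1)).card = q ^ (h - 1) :=
    tr_fiber_card hpa' hq2 hh1 hcK (one_pow q)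
  have hfib0 : (Finset.univ.filter (fun x : K => Tr q h x = 0)).card = q ^ (h - 1) :=
    tr_fiber_card hpa' hq2 hh1 hcK (zero_pow (by omega))
  -- a nonzero element of trace zero
  obtain ⟨x₀, hx₀mem, hx₀ne⟩ :
      ∃ x₀ ∈ Finset.univ.filter (fun x : K => Tr q h x = 0), x₀ ≠ 0 := by
    apply Finset.exists_mem_ne
    rw [hfib0]
    calc 1 < q := by omega
      _ = q ^ 1 := (pow_one q).symm
      _ ≤ q ^ (h - 1) := Nat.pow_le_pow_right (by omega) (by omega)
  have hx₀tr : Tr q h x₀ = 0 := by simpa using hx₀mem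
  -- nonvanishing of the basic vectors
  have h1 : ∀ z : K, (![z, Tr q h z, 1] : Fin 3 → K) ≠ 0 := fun z hz => by
    have := congrFun hz 2; simp at this
  have h2 : ∀ w : K, (![w, 1, 0] : Fin 3 → K) ≠ 0 := fun w hw => by
    have := congrFun hw 1; simp at this
  have h3 : (![1, 0, 0] : Fin 3 → K) ≠ 0 := fun hw => by
    have := congrFun hw 0; simp at this
  -- the parametrizing function
  set f : K ⊕ ({w : K // Tr q h w = 1} ⊕ Unit) → Projectivization K (Fin 3 → K) :=
    Sum.elim (fun z => Projectivization.mk K ![z, Tr q h z, 1] (h1 z))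
      (Sum.elim (fun w => Projectivization.mk K ![w.1, 1, 0] (h2 w.1))
        (fun _ => Projectivization.mk K ![1, 0, 0] h3)) with hf
  have hinj : Function.Injective f := by
    rintro (z | w | u) (z' | w' | u') hff <;>
      simp only [hf, Sum.elim_inl, Sum.elim_inr, mk_eq_mk_iff] at hff
    · obtain ⟨c, hc⟩ := hff
      have h2' := congrFun hc 2
      have h0' := congrFun hc 0
      simp [Units.smul_def] at h2' h0'
      rw [Sum.inl.injEq]
      rw [h2'] at h0'
      simpa using h0'.symm
    · obtain ⟨c, hc⟩ := hff
      have := congrFun hc 2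
      simp [Units.smul_def] at this
    · obtain ⟨c, hc⟩ := hff
      have := congrFun hc 2
      simp [Units.smul_def] at this
    · obtain ⟨c, hc⟩ := hff
      have := congrFun hc 2
      simp [Units.smul_def] at this
    · obtain ⟨c, hc⟩ := hff
      have h1' := congrFun hc 1
      have h0' := congrFun hc 0
      simp [Units.smul_def] at h1' h0'
      rw [Sum.inr.injEq, Sum.inl.injEq, Subtype.ext_iff]
      rw [h1'] at h0'
      simpa using h0'.symm
    · obtain ⟨c, hc⟩ := hff
      have := congrFun hc 1
      simp [Units.smul_def] at this
    · obtain ⟨c, hc⟩ := hff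
      have := congrFun hc 2
      simp [Units.smul_def] at this
    · obtain ⟨c, hc⟩ := hff
      have := congrFun hc 1
      simp [Units.smul_def] at this
    · rfl
  have halg : ∀ y : F, (algebraMap F K y) ^ q = algebraMap F K y := fun y => by
    rw [← map_pow]
    congr 1
    rw [← hcard]
    exact FiniteField.pow_card y
  have hrange : traceSet q h F K = Set.range f := by
    ext P
    constructor
    · rintro ⟨x, y, hxy, hv, rfl⟩
      by_cases hy : y = 0
      · subst hy
        have hx : x ≠ 0 := hxy.resolve_right (fun hc => hc rfl)
        by_cases htr : Tr q h x = 0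
        · refine ⟨Sum.inr (Sum.inr ()), ?_⟩
          simp only [hf, Sum.elim_inr]
          rw [eq_comm, mk_eq_mk_iff]
          refine ⟨Units.mk0 x hx, ?_⟩
          funext i
          fin_cases i <;> simp [Units.smul_def, htr]
        · refine ⟨Sum.inr (Sum.inl ⟨(Tr q h x)⁻¹ * x, ?_⟩), ?_⟩
          · rw [Tr_mul_fixed ?_ x]
            · exact inv_mul_cancel₀ htr
            · rw [inv_pow, Tr_pow_q hpa' hcK]
          · simp only [hf, Sum.elim_inr, Sum.elim_inl]
            rw [eq_comm, mk_eq_mk_iff]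
            refine ⟨Units.mk0 (Tr q h x) htr, ?_⟩
            funext i
            fin_cases i <;>
              simp [Units.smul_def, mul_inv_cancel_left₀ htr]
      · set c : K := algebraMap F K y with hcdef
        have hc : c ≠ 0 := fun h0 => hy ((algebraMap F K).injective (by rw [← hcdef, h0, map_zero]))
        refine ⟨Sum.inl (c⁻¹ * x), ?_⟩
        simp only [hf, Sum.elim_inl]
        rw [eq_comm, mk_eq_mk_iff]
        refine ⟨Units.mk0 c hc, ?_⟩
        have htr : Tr q h (c⁻¹ * x) = c⁻¹ * Tr q h x := by
          apply Tr_mul_fixed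
          rw [inv_pow, halg y]
        funext i
        fin_cases i <;>
          simp [Units.smul_def, htr, mul_inv_cancel_left₀ hc, ← hcdef]
    · rintro ⟨(z | w | u), rfl⟩
      · refine ⟨z, 1, Or.inr one_ne_zero, ?_⟩
        simp only [map_one]
        exact ⟨h1 z, rfl⟩
      · have hw0 : w.1 ≠ 0 := fun h0 => by
          have := w.2
          rw [h0, Tr_zero hq2] at this
          exact one_ne_zero this.symm
        refine ⟨w.1, 0, Or.inl hw0, ?_⟩
        simp only [map_zero, w.2]
        exact ⟨h2 w.1, rfl⟩
      · refine ⟨x₀, 0, Or.inl hx₀ne, ?_⟩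
        simp only [map_zero, hx₀tr]
        refine ⟨fun h0 => hx₀ne (by simpa using congrFun h0 0), ?_⟩
        simp only [hf, Sum.elim_inr]
        rw [mk_eq_mk_iff]
        refine ⟨Units.mk0 x₀⁻¹ (inv_ne_zero hx₀ne), ?_⟩
        funext i
        fin_cases i <;> simp [Units.smul_def, inv_mul_cancel₀ hx₀ne]
  rw [hrange, ← Nat.card_coe_set_eq, Nat.card_range_of_injective hinj,
    Nat.card_sum, Nat.card_sum]
  have hK' : Nat.card K = q ^ h := by rw [Nat.card_eq_fintype_card, hcK]
  have hsub : Nat.card {w : K // Tr q h w = 1} = q ^ (h - 1) := by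
    rw [Nat.card_eq_fintype_card, Fintype.card_subtype]
    exact hfib1
  have hu : Nat.card Unit = 1 := Nat.card_unique
  rw [hK', hsub, hu]
  omega
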